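/- Let A ∈ ℍ^{m×n} be a quaternion matrix with rank(A) = ν, let S₁ ∈ ℍ^{n×p} and T₁ ∈ ℍ^{q×m}, let Y ∈ ℍ^{p×q} be a {1}-inverse of T₁AS₁, and set X = S₁YT₁. Then X satisfies the four conditions AXA = A, XAX = X, R_r(X) = R_r(S₁), and N_r(X) = N_r(T₁) if and only if rank(T₁AS₁) = rank(S₁) = rank(T₁) = ν; moreover, when these rank equalities hold, X is the unique quaternion matrix in ℍ^{n×m} satisfying these four conditions. -/

import Mathlib

open Matrix

noncomputable section

/-- The real quaternion division ring ℍ. -/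
abbrev Quat : Type := Quaternion ℝ

/-- Left range `R_l(A) = {xA : x ∈ ℍ^{1×m}} ⊆ ℍ^{1×n}`. -/
def leftRange {m n : ℕ} (A : Matrix (Fin m) (Fin n) Quat) : Set (Fin n → Quat) :=
  {y | ∃ x : Fin m → Quat, y = Matrix.vecMul x A}

/-- Left null space `N_l(A) = {x ∈ ℍ^{1×m} : xA = 0}`. -/
def leftNull {m n : ℕ} (A : Matrix (Fin m) (Fin n) Quat) : Set (Fin m → Quat) :=
  {x | Matrix.vecMul x A = 0}

/-- Right range `R_r(A) = {Ax : x ∈ ℍ^{n×1}} ⊆ ℍ^{m×1}`. -/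
def rightRange {m n : ℕ} (A : Matrix (Fin m) (Fin n) Quat) : Set (Fin m → Quat) :=
  {y | ∃ x : Fin n → Quat, y = Matrix.mulVec A x}

/-- Right null space `N_r(A) = {x ∈ ℍ^{n×1} : Ax = 0}`. -/
def rightNull {m n : ℕ} (A : Matrix (Fin m) (Fin n) Quat) : Set (Fin n → Quat) :=
  {x | Matrix.mulVec A x = 0}

/-- The rank of a quaternion matrix: the dimension of its left range
(the left ℍ-span of its rows) as a left ℍ-vector space. -/
def qRank {m n : ℕ} (A : Matrix (Fin m) (Fin n) Quat) : ℕ :=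
  Module.finrank Quat (Submodule.span Quat (Set.range (fun i : Fin m => A i)))

section Aux

variable {a b c d : ℕ}

lemma row_mul (M : Matrix (Fin a) (Fin b) Quat) (N : Matrix (Fin b) (Fin c) Quat) (i : Fin a) :
    (M * N) i = (M i) ᵥ* N := by
  funext j
  simp [Matrix.mul_apply, Matrix.vecMul, dotProduct]

def rowSp (M : Matrix (Fin a) (Fin b) Quat) : Submodule Quat (Fin b → Quat) :=
  LinearMap.range M.vecMulLinear

lemma qRank_eq_finrank_rowSp (M : Matrix (Fin a) (Fin b) Quat) :
    qRank M = Module.finrank Quat (rowSp M) := by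
  have h : Submodule.span Quat (Set.range (fun i : Fin a => M i)) = rowSp M := by
    rw [rowSp, range_vecMulLinear]
    rfl
  rw [qRank, h]

lemma mem_rowSp {M : Matrix (Fin a) (Fin b) Quat} {y : Fin b → Quat} :
    y ∈ rowSp M ↔ ∃ x, x ᵥ* M = y := by
  simp [rowSp, LinearMap.mem_range]

lemma row_mem_rowSp (M : Matrix (Fin a) (Fin b) Quat) (i : Fin a) : M i ∈ rowSp M :=
  mem_rowSp.mpr ⟨Pi.single i 1, Matrix.single_one_vecMul i M⟩

lemma rowSp_mul_le (M : Matrix (Fin a) (Fin b) Quat) (N : Matrix (Fin b) (Fin c) Quat) :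
    rowSp (M * N) ≤ rowSp N := by
  intro y hy
  obtain ⟨x, hx⟩ := mem_rowSp.mp hy
  exact mem_rowSp.mpr ⟨x ᵥ* M, by rw [Matrix.vecMul_vecMul]; exact hx⟩

lemma vecMulLinear_mul (M : Matrix (Fin a) (Fin b) Quat) (N : Matrix (Fin b) (Fin c) Quat) :
    (M * N).vecMulLinear = N.vecMulLinear.comp M.vecMulLinear := by
  apply LinearMap.ext
  intro x
  simp [Matrix.vecMul_vecMul]

lemma rowSp_mul_eq_map (M : Matrix (Fin a) (Fin b) Quat) (N : Matrix (Fin b) (Fin c) Quat) :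
    rowSp (M * N) = (rowSp M).map N.vecMulLinear := by
  rw [rowSp, rowSp, vecMulLinear_mul, LinearMap.range_comp]

lemma qRank_mul_le_right (M : Matrix (Fin a) (Fin b) Quat) (N : Matrix (Fin b) (Fin c) Quat) :
    qRank (M * N) ≤ qRank N := by
  rw [qRank_eq_finrank_rowSp, qRank_eq_finrank_rowSp]
  exact Submodule.finrank_mono (rowSp_mul_le M N)

lemma qRank_mul_le_left (M : Matrix (Fin a) (Fin b) Quat) (N : Matrix (Fin b) (Fin c) Quat) :
    qRank (M * N) ≤ qRank M := by
  rw [qRank_eq_finrank_rowSp, qRank_eq_finrank_rowSp, rowSp_mul_eq_map]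
  exact Submodule.finrank_map_le _ _

lemma exists_left_factor {M : Matrix (Fin a) (Fin b) Quat} {N : Matrix (Fin c) (Fin b) Quat}
    (h : rowSp M ≤ rowSp N) : ∃ C : Matrix (Fin a) (Fin c) Quat, M = C * N := by
  have h' : ∀ i, ∃ x, x ᵥ* N = M i := fun i => mem_rowSp.mp (h (row_mem_rowSp M i))
  choose x hx using h'
  refine ⟨Matrix.of x, ?_⟩
  refine Matrix.ext fun i j => ?_
  rw [row_mul]
  exact (congrFun (hx i) j).symm

def leftKer (M : Matrix (Fin a) (Fin b) Quat) : Submodule Quat (Fin a → Quat) :=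
  LinearMap.ker M.vecMulLinear

lemma mem_leftKer {M : Matrix (Fin a) (Fin b) Quat} {x : Fin a → Quat} :
    x ∈ leftKer M ↔ x ᵥ* M = 0 := by
  simp [leftKer, LinearMap.mem_ker]

lemma qRank_add_finrank_leftKer (M : Matrix (Fin a) (Fin b) Quat) :
    qRank M + Module.finrank Quat (leftKer M) = a := by
  have h := LinearMap.finrank_range_add_finrank_ker M.vecMulLinear
  rw [Module.finrank_fin_fun] at h
  rw [qRank_eq_finrank_rowSp]
  exact h

lemma leftKer_le_mul (M : Matrix (Fin a) (Fin b) Quat) (N : Matrix (Fin b) (Fin c) Quat) :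
    leftKer M ≤ leftKer (M * N) := by
  intro x hx
  rw [mem_leftKer] at hx ⊢
  rw [← Matrix.vecMul_vecMul, hx, Matrix.zero_vecMul]

lemma mul_eq_zero_of_leftKer_le {W : Matrix (Fin a) (Fin b) Quat}
    {N : Matrix (Fin b) (Fin c) Quat} {T : Matrix (Fin b) (Fin d) Quat}
    (h : leftKer N ≤ leftKer T) (hWN : W * N = 0) : W * T = 0 := by
  refine Matrix.ext fun i j => ?_
  have h1 : W i ∈ leftKer N := by
    rw [mem_leftKer, ← row_mul, hWN]
    rfl
  have h2 := mem_leftKer.mp (h h1)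
  have : (W * T) i = 0 := by rw [row_mul, h2]
  exact congrFun this j

lemma exists_right_factor {M : Matrix (Fin a) (Fin b) Quat} {N : Matrix (Fin a) (Fin c) Quat}
    (h : leftKer N ≤ leftKer M) : ∃ C : Matrix (Fin c) (Fin b) Quat, M = N * C := by
  classical
  set f := N.vecMulLinear with hf
  set g := M.vecMulLinear with hg
  obtain ⟨s, hs⟩ := f.rangeRestrict.exists_rightInverse_of_surjective
    (LinearMap.range_eq_top.2 f.surjective_rangeRestrict)
  obtain ⟨H, hH⟩ := LinearMap.exists_extend (g.comp s)
  have key : ∀ v, H (f v) = g v := by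
    intro v
    have h2 : f (s (f.rangeRestrict v)) = f v := by
      have h3 : f.rangeRestrict (s (f.rangeRestrict v)) = f.rangeRestrict v :=
        LinearMap.congr_fun hs _
      calc f (s (f.rangeRestrict v)) = ↑(f.rangeRestrict (s (f.rangeRestrict v))) := rfl
        _ = ↑(f.rangeRestrict v) := by rw [h3]
        _ = f v := rfl
    have h3 : s (f.rangeRestrict v) - v ∈ LinearMap.ker f := by
      rw [LinearMap.mem_ker, map_sub, h2, sub_self]
    have h4 : g (s (f.rangeRestrict v)) = g v := by
      have h5 := h h3
      rw [leftKer, LinearMap.mem_ker, ← hg, map_sub, sub_eq_zero] at h5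
      exact h5
    calc H (f v) = H ((LinearMap.range f).subtype (f.rangeRestrict v)) := rfl
      _ = (g.comp s) (f.rangeRestrict v) := LinearMap.congr_fun hH _
      _ = g v := h4
  let C := LinearMap.toMatrixRight' H
  have hC : Matrix.vecMulLinear C = H := LinearEquiv.symm_apply_apply LinearMap.toMatrixRight' H
  refine ⟨C, Matrix.ext fun i j => ?_⟩
  have hrow : M i = (N * C) i := by
    rw [row_mul]
    have e1 : (N i) ᵥ* C = H (N i) := by rw [← hC]; rfl
    have e2 : N i = f (Pi.single i 1) := by
      rw [hf]
      exact (Matrix.single_one_vecMul i N).symm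
    have e3 : M i = g (Pi.single i 1) := by
      rw [hg]
      exact (Matrix.single_one_vecMul i M).symm
    rw [e1, e2, key, ← e3]
  exact congrFun hrow j

end Aux

section Star

variable {a b c : ℕ}

lemma mulVec_eq_zero_iff (M : Matrix (Fin a) (Fin b) Quat) (x : Fin b → Quat) :
    M *ᵥ x = 0 ↔ (star x) ᵥ* Mᴴ = 0 := by
  rw [← Matrix.star_mulVec]
  constructor
  · intro h; rw [h]; simp
  · intro h; exact star_eq_zero.mp h

lemma leftKer_conj_le_of_rightNull_le {M : Matrix (Fin a) (Fin b) Quat}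
    {N : Matrix (Fin c) (Fin b) Quat}
    (h : rightNull M ⊆ rightNull N) : leftKer Mᴴ ≤ leftKer Nᴴ := by
  intro u hu
  rw [mem_leftKer] at hu ⊢
  have h1 : M *ᵥ (star u) = 0 := by
    rw [mulVec_eq_zero_iff, star_star]; exact hu
  have h2 : star u ∈ rightNull M := h1
  have h3 : N *ᵥ (star u) = 0 := h h2
  rw [mulVec_eq_zero_iff, star_star] at h3
  exact h3

lemma rowSp_conj_le_of_rightRange_le {M : Matrix (Fin a) (Fin b) Quat}
    {N : Matrix (Fin a) (Fin c) Quat}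
    (h : rightRange M ⊆ rightRange N) : rowSp Mᴴ ≤ rowSp Nᴴ := by
  intro u hu
  obtain ⟨x, hx⟩ := mem_rowSp.mp hu
  have h1 : star u = M *ᵥ star x := by
    rw [← hx, Matrix.star_vecMul, Matrix.conjTranspose_conjTranspose]
  have h2 : star u ∈ rightRange M := ⟨star x, h1⟩
  obtain ⟨w, hw⟩ := h h2
  refine mem_rowSp.mpr ⟨star w, ?_⟩
  have h3 : star (star u) = star (N *ᵥ w) := by rw [← hw]
  rw [star_star, Matrix.star_mulVec] at h3
  exact h3.symm

lemma exists_factor_of_rightRange_le {M : Matrix (Fin a) (Fin b) Quat}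
    {N : Matrix (Fin a) (Fin c) Quat}
    (h : rightRange M ⊆ rightRange N) : ∃ C : Matrix (Fin c) (Fin b) Quat, M = N * C := by
  obtain ⟨C, hC⟩ := exists_left_factor (rowSp_conj_le_of_rightRange_le h)
  refine ⟨Cᴴ, ?_⟩
  have := congrArg Matrix.conjTranspose hC
  rw [Matrix.conjTranspose_conjTranspose, Matrix.conjTranspose_mul,
    Matrix.conjTranspose_conjTranspose] at this
  exact this

lemma exists_factor_of_rightNull_le {M : Matrix (Fin a) (Fin b) Quat}
    {N : Matrix (Fin c) (Fin b) Quat}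
    (h : rightNull N ⊆ rightNull M) : ∃ C : Matrix (Fin a) (Fin c) Quat, M = C * N := by
  obtain ⟨C, hC⟩ := exists_right_factor (leftKer_conj_le_of_rightNull_le h)
  refine ⟨Cᴴ, ?_⟩
  have := congrArg Matrix.conjTranspose hC
  rw [Matrix.conjTranspose_conjTranspose, Matrix.conjTranspose_mul,
    Matrix.conjTranspose_conjTranspose] at this
  exact this

lemma rowSp_eq_of_le_of_rank_le {M : Matrix (Fin a) (Fin b) Quat}
    {N : Matrix (Fin c) (Fin b) Quat}
    (hle : rowSp M ≤ rowSp N) (hr : qRank N ≤ qRank M) : rowSp M = rowSp N := by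
  refine Submodule.eq_of_le_of_finrank_le hle ?_
  rw [← qRank_eq_finrank_rowSp, ← qRank_eq_finrank_rowSp]
  exact hr

lemma leftKer_eq_of_le_of_rank_le {M : Matrix (Fin a) (Fin b) Quat}
    {N : Matrix (Fin a) (Fin c) Quat}
    (hle : leftKer M ≤ leftKer N) (hr : qRank M ≤ qRank N) : leftKer M = leftKer N := by
  refine Submodule.eq_of_le_of_finrank_le hle ?_
  have h1 := qRank_add_finrank_leftKer M
  have h2 := qRank_add_finrank_leftKer N
  omega

end Star

section Main

variable {m n p q : ℕ}

lemma core {A : Matrix (Fin m) (Fin n) Quat}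
    {S₁ : Matrix (Fin n) (Fin p) Quat} {T₁ : Matrix (Fin q) (Fin m) Quat}
    {Y : Matrix (Fin p) (Fin q) Quat}
    (hY : T₁ * A * S₁ * Y * (T₁ * A * S₁) = T₁ * A * S₁)
    (hs : qRank (T₁ * A * S₁) = qRank S₁) (ht : qRank (T₁ * A * S₁) = qRank T₁)
    (hA : qRank (T₁ * A * S₁) = qRank A) :
    T₁ * A * S₁ * Y * T₁ = T₁ ∧ S₁ * Y * (T₁ * A * S₁) = S₁ ∧
      leftKer (T₁ * A) = leftKer T₁ ∧ A * (S₁ * Y * T₁) * A = A := by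
  set B := T₁ * A * S₁ with hB
  have hassoc : T₁ * A * S₁ = T₁ * (A * S₁) := Matrix.mul_assoc T₁ A S₁
  have u1 : qRank B ≤ qRank (T₁ * A) := qRank_mul_le_left _ _
  have u2 : qRank (T₁ * A) ≤ qRank A := qRank_mul_le_right _ _
  have rTA : qRank (T₁ * A) = qRank A := by omega
  have kTA : leftKer T₁ = leftKer (T₁ * A) :=
    leftKer_eq_of_le_of_rank_le (leftKer_le_mul T₁ A) (by omega)
  have kB : leftKer T₁ = leftKer B := by
    rw [hB, hassoc]
    refine leftKer_eq_of_le_of_rank_le (leftKer_le_mul T₁ (A * S₁)) ?_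
    rw [← hassoc, ← hB]
    omega
  have hW : (B * Y - 1) * B = 0 := by
    rw [Matrix.sub_mul, Matrix.one_mul, hY, sub_self]
  have hWT : (B * Y - 1) * T₁ = 0 := mul_eq_zero_of_leftKer_le kB.ge hW
  have c1 : B * Y * T₁ = T₁ := by
    have h' := hWT
    rw [Matrix.sub_mul, Matrix.one_mul, sub_eq_zero] at h'
    exact h'
  have hle1 : rowSp B ≤ rowSp S₁ := by
    rw [hB, hassoc]
    exact le_trans (rowSp_mul_le T₁ (A * S₁)) (rowSp_mul_le A S₁)
  have hre : rowSp B = rowSp S₁ := rowSp_eq_of_le_of_rank_le hle1 hs.ge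
  obtain ⟨C, hC⟩ := exists_left_factor hre.ge
  have c2 : S₁ * Y * B = S₁ := by
    conv_lhs => rw [hC]
    rw [Matrix.mul_assoc C B Y, Matrix.mul_assoc C (B * Y) B, hY, ← hC]
  have hre2 : rowSp (T₁ * A) = rowSp A :=
    rowSp_eq_of_le_of_rank_le (rowSp_mul_le T₁ A) rTA.ge
  obtain ⟨D, hD⟩ := exists_left_factor hre2.ge
  have hTAX : T₁ * A * (S₁ * Y * T₁) = T₁ := by
    have e : T₁ * A * (S₁ * Y * T₁) = B * Y * T₁ := by
      rw [hB]
      simp only [Matrix.mul_assoc]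
    rw [e, c1]
  have c4 : A * (S₁ * Y * T₁) * A = A := by
    calc A * (S₁ * Y * T₁) * A = D * (T₁ * A) * (S₁ * Y * T₁) * A := by rw [← hD]
      _ = D * (T₁ * A * (S₁ * Y * T₁)) * A := by simp only [Matrix.mul_assoc]
      _ = D * T₁ * A := by rw [hTAX]
      _ = A := by rw [Matrix.mul_assoc, ← hD]
  exact ⟨c1, c2, kTA.symm, c4⟩

/-- Theorem 3.4 (e). -/
theorem stmt10 {m n p q ν : ℕ} (A : Matrix (Fin m) (Fin n) Quat) (hA : qRank A = ν)
    (S₁ : Matrix (Fin n) (Fin p) Quat) (T₁ : Matrix (Fin q) (Fin m) Quat)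
    (Y : Matrix (Fin p) (Fin q) Quat)
    (hY : (T₁ * A * S₁) * Y * (T₁ * A * S₁) = T₁ * A * S₁)
    (X : Matrix (Fin n) (Fin m) Quat) (hX : X = S₁ * Y * T₁) :
    ((A * X * A = A ∧ X * A * X = X ∧ rightRange X = rightRange S₁ ∧
        rightNull X = rightNull T₁) ↔
      (qRank (T₁ * A * S₁) = qRank S₁ ∧ qRank (T₁ * A * S₁) = qRank T₁ ∧
        qRank (T₁ * A * S₁) = ν)) ∧
    (qRank (T₁ * A * S₁) = qRank S₁ → qRank (T₁ * A * S₁) = qRank T₁ →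
      qRank (T₁ * A * S₁) = ν →
      ∀ Z : Matrix (Fin n) (Fin m) Quat,
        A * Z * A = A → Z * A * Z = Z → rightRange Z = rightRange S₁ →
          rightNull Z = rightNull T₁ → Z = X) := by
  constructor
  · constructor
    · rintro ⟨h1, h2, h3, h4⟩
      have hXA : qRank X = qRank A := by
        have l1 : qRank A ≤ qRank X := by
          calc qRank A = qRank (A * X * A) := by rw [h1]
            _ ≤ qRank (A * X) := qRank_mul_le_left _ _
            _ ≤ qRank X := qRank_mul_le_right _ _
        have l2 : qRank X ≤ qRank A := by
          calc qRank X = qRank (X * A * X) := by rw [h2]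
            _ ≤ qRank (X * A) := qRank_mul_le_left _ _
            _ ≤ qRank A := qRank_mul_le_right _ _
        omega
      have hS : qRank S₁ = qRank X := by
        obtain ⟨W, hW⟩ := exists_factor_of_rightRange_le h3.subset
        obtain ⟨V, hV⟩ := exists_factor_of_rightRange_le h3.symm.subset
        have l1 : qRank X ≤ qRank S₁ := by
          calc qRank X = qRank (S₁ * W) := by rw [← hW]
            _ ≤ qRank S₁ := qRank_mul_le_left _ _
        have l2 : qRank S₁ ≤ qRank X := by
          calc qRank S₁ = qRank (X * V) := by rw [← hV]
            _ ≤ qRank X := qRank_mul_le_left _ _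
        omega
      have hT : qRank T₁ = qRank X := by
        obtain ⟨C, hC⟩ := exists_factor_of_rightNull_le h4.symm.subset
        obtain ⟨C', hC'⟩ := exists_factor_of_rightNull_le h4.subset
        have l1 : qRank X ≤ qRank T₁ := by
          calc qRank X = qRank (C * T₁) := by rw [← hC]
            _ ≤ qRank T₁ := qRank_mul_le_right _ _
        have l2 : qRank T₁ ≤ qRank X := by
          calc qRank T₁ = qRank (C' * X) := by rw [← hC']
            _ ≤ qRank X := qRank_mul_le_right _ _
        omega
      have hA2 : A * S₁ * Y * (T₁ * A) = A := by
        conv_rhs => rw [← h1]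
        rw [hX]
        simp only [Matrix.mul_assoc]
      have hTA2 : T₁ * A * S₁ * Y * (T₁ * A) = T₁ * A := by
        conv_rhs => rw [← h1]
        rw [hX]
        simp only [Matrix.mul_assoc]
      have d1 : qRank A ≤ qRank (T₁ * A) := by
        calc qRank A = qRank (A * S₁ * Y * (T₁ * A)) := by rw [hA2]
          _ ≤ qRank (T₁ * A) := qRank_mul_le_right _ _
      have d2 : qRank (T₁ * A) ≤ qRank (T₁ * A * S₁) := by
        calc qRank (T₁ * A) = qRank (T₁ * A * S₁ * Y * (T₁ * A)) := by rw [hTA2]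
          _ ≤ qRank (T₁ * A * S₁ * Y) := qRank_mul_le_left _ _
          _ ≤ qRank (T₁ * A * S₁) := qRank_mul_le_left _ _
      have u1 : qRank (T₁ * A * S₁) ≤ qRank (T₁ * A) := qRank_mul_le_left _ _
      have u2 : qRank (T₁ * A) ≤ qRank A := qRank_mul_le_right _ _
      exact ⟨by omega, by omega, by omega⟩
    · rintro ⟨hs, ht, hν⟩
      have hA' : qRank (T₁ * A * S₁) = qRank A := by omega
      obtain ⟨c1, c2, c3, c4⟩ := core hY hs ht hA'
      have hXAS : X * A * S₁ = S₁ := by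
        have e : X * A * S₁ = S₁ * Y * (T₁ * A * S₁) := by
          rw [hX]
          simp only [Matrix.mul_assoc]
        rw [e, c2]
      have hTAX : T₁ * A * X = T₁ := by
        have e : T₁ * A * X = T₁ * A * S₁ * Y * T₁ := by
          rw [hX]
          simp only [Matrix.mul_assoc]
        rw [e, c1]
      refine ⟨by rw [hX]; exact c4, ?_, ?_, ?_⟩
      · calc X * A * X = X * A * S₁ * (Y * T₁) := by
              rw [hX]
              simp only [Matrix.mul_assoc]
          _ = S₁ * (Y * T₁) := by rw [hXAS]
          _ = X := by rw [hX, Matrix.mul_assoc]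
      · ext y
        simp only [rightRange, Set.mem_setOf_eq]
        constructor
        · rintro ⟨v, rfl⟩
          exact ⟨(Y * T₁) *ᵥ v, by rw [Matrix.mulVec_mulVec, hX, Matrix.mul_assoc]⟩
        · rintro ⟨v, rfl⟩
          refine ⟨(A * S₁) *ᵥ v, ?_⟩
          rw [Matrix.mulVec_mulVec, ← Matrix.mul_assoc, hXAS]
      · ext v
        simp only [rightNull, Set.mem_setOf_eq]
        constructor
        · intro hv
          have e : T₁ *ᵥ v = (T₁ * A) *ᵥ (X *ᵥ v) := by
            rw [Matrix.mulVec_mulVec, hTAX]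
          rw [e, hv, Matrix.mulVec_zero]
        · intro hv
          have e : X *ᵥ v = (S₁ * Y) *ᵥ (T₁ *ᵥ v) := by
            rw [Matrix.mulVec_mulVec, ← hX]
          rw [e, hv, Matrix.mulVec_zero]
  · intro hs ht hν Z hZ1 hZ2 hZ3 hZ4
    have hA' : qRank (T₁ * A * S₁) = qRank A := by omega
    obtain ⟨c1, c2, c3, c4⟩ := core hY hs ht hA'
    have hXAS : X * A * S₁ = S₁ := by
      have e : X * A * S₁ = S₁ * Y * (T₁ * A * S₁) := by
        rw [hX]
        simp only [Matrix.mul_assoc]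
      rw [e, c2]
    obtain ⟨V, hV⟩ := exists_factor_of_rightRange_le hZ3.subset
    obtain ⟨C, hCZ⟩ := exists_factor_of_rightNull_le hZ4.symm.subset
    have e : T₁ * A * C * (T₁ * A) = T₁ * A := by
      calc T₁ * A * C * (T₁ * A) = T₁ * (A * Z * A) := by
            rw [hCZ]
            simp only [Matrix.mul_assoc]
        _ = T₁ * A := by rw [hZ1]
    have hW : (T₁ * A * C - 1) * (T₁ * A) = 0 := by
      rw [Matrix.sub_mul, Matrix.one_mul, e, sub_self]
    have hWT : (T₁ * A * C - 1) * T₁ = 0 := mul_eq_zero_of_leftKer_le c3.le hW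
    have e2 : T₁ * A * C * T₁ = T₁ := by
      have h' := hWT
      rw [Matrix.sub_mul, Matrix.one_mul, sub_eq_zero] at h'
      exact h'
    have hTAZ : T₁ * A * Z = T₁ := by
      calc T₁ * A * Z = T₁ * A * C * T₁ := by
            rw [hCZ, Matrix.mul_assoc (T₁ * A) C T₁]
        _ = T₁ := e2
    have e3 : X * A * Z = Z := by
      calc X * A * Z = X * A * S₁ * V := by
            rw [hV]
            simp only [Matrix.mul_assoc]
        _ = S₁ * V := by rw [hXAS]
        _ = Z := hV.symm
    have e4 : X * A * Z = X := by
      calc X * A * Z = S₁ * Y * (T₁ * A * Z) := by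
            rw [hX]
            simp only [Matrix.mul_assoc]
        _ = S₁ * Y * T₁ := by rw [hTAZ]
        _ = X := hX.symm
    rw [← e3, e4]


end Main
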